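/- Suppose W ∈ ℝ^{C×n}, H_1 ∈ ℝ^{n×C}, b = (1/C)1_C satisfy W H_1 + b 1_C^⊤ = I_C, H_1 1_C = 0, and μ W^⊤ W = m H_1 H_1^⊤ for some constants μ, m > 0. Then H_1^⊤ H_1 = √(μ/m) (I_C - (1/C) 1_C 1_C^⊤) and W W^⊤ = √(m/μ) (I_C - (1/C) 1_C 1_C^⊤). -/

import Mathlib

open Matrix

private lemma aux_sqrt_smul_proj {C : ℕ} (P : Matrix (Fin C) (Fin C) ℝ)
    (hPH : Pᴴ = P) (hPP : P * P = P) (x : ℝ) (hx : 0 ≤ x)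
    (A : Matrix (Fin C) (Fin C) ℝ) (hA : A.PosSemidef) (hA2 : A * A = x • P) :
    A = Real.sqrt x • P := by
  have hr : (0:ℝ) ≤ Real.sqrt (Real.sqrt x) := Real.sqrt_nonneg _
  have hB : (Real.sqrt x • P).PosSemidef := by
    have : (Real.sqrt (Real.sqrt x) • P)ᴴ * (Real.sqrt (Real.sqrt x) • P)
        = Real.sqrt x • P := by
      rw [conjTranspose_smul, hPH]
      simp only [star_trivial]
      rw [smul_mul_smul_comm, hPP, Real.mul_self_sqrt (Real.sqrt_nonneg x)]
    rw [← this]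
    exact posSemidef_conjTranspose_mul_self _
  open scoped MatrixOrder in refine (CFC.sq_eq_sq_iff A _ hA.nonneg hB.nonneg).mp ?_
  rw [pow_two, pow_two, hA2, smul_mul_smul_comm, hPP, Real.mul_self_sqrt hx]

theorem stmt_14 (C n : ℕ) (hC : 2 ≤ C) (hn : C ≤ n) (μ m : ℝ) (hμ : 0 < μ) (hm : 0 < m)
    (W : Matrix (Fin C) (Fin n) ℝ) (H1 : Matrix (Fin n) (Fin C) ℝ)
    (hres : W * H1 + (C : ℝ)⁻¹ • Matrix.of (fun _ _ : Fin C => (1 : ℝ)) = 1)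
    (hmean : H1.mulVec (fun _ => 1) = 0)
    (hinv : μ • (Wᵀ * W) = m • (H1 * H1ᵀ)) :
    H1ᵀ * H1 = Real.sqrt (μ / m) •
        ((1 : Matrix (Fin C) (Fin C) ℝ) - (C : ℝ)⁻¹ • Matrix.of (fun _ _ : Fin C => (1 : ℝ))) ∧
    W * Wᵀ = Real.sqrt (m / μ) •
        ((1 : Matrix (Fin C) (Fin C) ℝ) - (C : ℝ)⁻¹ • Matrix.of (fun _ _ : Fin C => (1 : ℝ))) := by
  have hC0 : (C : ℝ) ≠ 0 := by positivity
  set J : Matrix (Fin C) (Fin C) ℝ := Matrix.of (fun _ _ => 1) with hJ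
  set P : Matrix (Fin C) (Fin C) ℝ := 1 - (C : ℝ)⁻¹ • J with hP
  have hJJ : J * J = (C : ℝ) • J := by
    ext i j
    simp [hJ, Matrix.mul_apply]
  have hPP : P * P = P := by
    rw [hP]
    rw [Matrix.sub_mul, Matrix.one_mul, Matrix.mul_sub, Matrix.mul_one,
      Matrix.smul_mul, Matrix.mul_smul, hJJ, smul_smul, smul_smul,
      mul_assoc, inv_mul_cancel₀ hC0, mul_one]
    abel
  have hPH : Pᴴ = P := by
    ext i j
    simp [hP, Matrix.one_apply, hJ, eq_comm]
  have hWH : W * H1 = P := by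
    rw [hP]
    exact eq_sub_of_add_eq hres
  -- first part
  have hA2 : (H1ᵀ * H1) * (H1ᵀ * H1) = (μ / m) • P := by
    have h1 : m • ((H1ᵀ * H1) * (H1ᵀ * H1)) = m • (H1ᵀ * (H1 * H1ᵀ) * H1) := by
      simp only [Matrix.mul_assoc]
    have h2 : H1ᵀ * (m • (H1 * H1ᵀ)) * H1 = H1ᵀ * (μ • (Wᵀ * W)) * H1 := by rw [hinv]
    have h3 : H1ᵀ * (μ • (Wᵀ * W)) * H1 = μ • ((W * H1)ᵀ * (W * H1)) := by
      rw [Matrix.transpose_mul]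
      simp only [Matrix.mul_smul, Matrix.smul_mul, Matrix.mul_assoc]
    have hPt : Pᵀ = P := by ext i j; simpa using congrFun (congrFun hPH i) j
    have key : m • ((H1ᵀ * H1) * (H1ᵀ * H1)) = μ • P := by
      rw [h1]
      rw [show H1ᵀ * (H1 * H1ᵀ) * H1 = H1ᵀ * (H1 * H1ᵀ) * H1 from rfl]
      calc m • (H1ᵀ * (H1 * H1ᵀ) * H1) = H1ᵀ * (m • (H1 * H1ᵀ)) * H1 := by
            simp only [Matrix.mul_smul, Matrix.smul_mul]
        _ = μ • ((W * H1)ᵀ * (W * H1)) := by rw [h2, h3]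
        _ = μ • P := by rw [hWH, hPt, hPP]
    have := congrArg (fun M => m⁻¹ • M) key
    simpa [smul_smul, inv_mul_cancel₀ hm.ne', div_eq_inv_mul, mul_comm] using this
  have hApsd : (H1ᵀ * H1).PosSemidef := by
    have : H1ᵀ = H1ᴴ := by ext i j; simp
    rw [this]
    exact posSemidef_conjTranspose_mul_self _
  have hG2 : (W * Wᵀ) * (W * Wᵀ) = (m / μ) • P := by
    have key : μ • ((W * Wᵀ) * (W * Wᵀ)) = m • P := by
      calc μ • ((W * Wᵀ) * (W * Wᵀ)) = W * (μ • (Wᵀ * W)) * Wᵀ := by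
            simp only [Matrix.mul_smul, Matrix.smul_mul, Matrix.mul_assoc]
        _ = W * (m • (H1 * H1ᵀ)) * Wᵀ := by rw [hinv]
        _ = m • ((W * H1) * (W * H1)ᵀ) := by
            rw [Matrix.transpose_mul]
            simp only [Matrix.mul_smul, Matrix.smul_mul, Matrix.mul_assoc]
        _ = m • P := by
            have hPt : Pᵀ = P := by ext i j; simpa using congrFun (congrFun hPH i) j
            rw [hWH, hPt, hPP]
    have := congrArg (fun M => μ⁻¹ • M) key
    simpa [smul_smul, inv_mul_cancel₀ hμ.ne', div_eq_inv_mul, mul_comm] using this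
  have hGpsd : (W * Wᵀ).PosSemidef := by
    have : Wᵀ = Wᴴ := by ext i j; simp
    rw [this]
    exact posSemidef_self_mul_conjTranspose _
  refine ⟨?_, ?_⟩
  · exact aux_sqrt_smul_proj P hPH hPP (μ / m) (by positivity) _ hApsd hA2
  · exact aux_sqrt_smul_proj P hPH hPP (m / μ) (by positivity) _ hGpsd hG2
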